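/- For every controlled solution (x, p) = ((q1, q2, z), p) with z(0) ∈ [0, m2], one has q1(t) ≤ max(q1(0), λ1/θ1) and q2(t) ≤ max(q2(0), λ2/θ2) for all t ≥ 0. -/

import Mathlib

/-- Positivity invariance: if `f 0 ≥ 0` and the derivative is nonnegative
whenever `f ≤ 0`, then `f` stays nonnegative on `[0, ∞)`. -/
lemma my_nonneg_invariant (f f' : ℝ → ℝ)
    (hderiv : ∀ t, 0 ≤ t → HasDerivAt f (f' t) t)
    (hpos : ∀ t, 0 ≤ t → f t ≤ 0 → 0 ≤ f' t)
    (h0 : 0 ≤ f 0) : ∀ t, 0 ≤ t → 0 ≤ f t := by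
  intro t ht
  by_contra hneg
  push_neg at hneg
  set S : Set ℝ := Set.Icc 0 t ∩ f ⁻¹' Set.Ici 0 with hS
  have hcont : ContinuousOn f (Set.Icc 0 t) := fun u hu =>
    (hderiv u hu.1).continuousAt.continuousWithinAt
  have hSclosed : IsClosed S :=
    hcont.preimage_isClosed_of_isClosed isClosed_Icc isClosed_Ici
  have h0S : (0:ℝ) ∈ S := ⟨⟨le_refl 0, ht⟩, h0⟩
  have hbdd : BddAbove S := ⟨t, fun u hu => hu.1.2⟩
  have hsmem : sSup S ∈ S := hSclosed.csSup_mem ⟨0, h0S⟩ hbdd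
  set s := sSup S with hs
  obtain ⟨⟨hs0, hst⟩, hfs⟩ := hsmem
  have hfs : 0 ≤ f s := hfs
  have hslt : s < t := lt_of_le_of_ne hst (by intro h; rw [h] at hfs; linarith)
  have hIoc : ∀ u ∈ Set.Ioc s t, f u < 0 := by
    intro u hu
    by_contra h
    push_neg at h
    have : u ∈ S := ⟨⟨hs0.trans hu.1.le, hu.2⟩, h⟩
    exact absurd (le_csSup hbdd this) (not_le.2 hu.1)
  -- f is monotone on [s, t]
  have hmono : MonotoneOn f (Set.Icc s t) := by
    apply monotoneOn_of_deriv_nonneg (convex_Icc s t)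
    · exact fun u hu => (hderiv u (hs0.trans hu.1)).continuousAt.continuousWithinAt
    · intro u hu
      rw [interior_Icc] at hu
      exact ((hderiv u (hs0.trans hu.1.le)).differentiableAt).differentiableWithinAt
    · intro u hu
      rw [interior_Icc] at hu
      have hu0 : 0 ≤ u := hs0.trans hu.1.le
      rw [(hderiv u hu0).deriv]
      exact hpos u hu0 (hIoc u ⟨hu.1, hu.2.le⟩).le
  have := hmono (Set.left_mem_Icc.2 hslt.le) (Set.right_mem_Icc.2 hslt.le) hslt.le
  linarith

/-- Decay bound: if `f' ≤ lam - th * f` on `[0,∞)` with `th > 0`, then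
`f t ≤ max (f 0) (lam/th)`. -/
lemma my_decay_bound (lam th : ℝ) (hth : 0 < th) (f f' : ℝ → ℝ)
    (hderiv : ∀ t, 0 ≤ t → HasDerivAt f (f' t) t)
    (hle : ∀ t, 0 ≤ t → f' t ≤ lam - th * f t) :
    ∀ t, 0 ≤ t → f t ≤ max (f 0) (lam / th) := by
  intro t ht
  set M := max (f 0) (lam / th) with hM
  have hlamM : lam ≤ th * M := by
    have : lam / th ≤ M := le_max_right _ _
    calc lam = th * (lam / th) := by field_simp
    _ ≤ th * M := by nlinarith
  set g : ℝ → ℝ := fun u => (f u - M) * Real.exp (th * u) with hg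
  have hg' : ∀ u, 0 ≤ u →
      HasDerivAt g ((f' u + th * (f u - M)) * Real.exp (th * u)) u := by
    intro u hu
    have h1 : HasDerivAt (fun v => f v - M) (f' u) u := (hderiv u hu).sub_const M
    have h2 : HasDerivAt (fun v => Real.exp (th * v)) (th * Real.exp (th * u)) u := by
      have := (Real.hasDerivAt_exp (th * u)).comp u ((hasDerivAt_id u).const_mul th)
      exact this.congr_deriv (by ring)
    have := h1.mul h2
    exact this.congr_deriv (by ring)
  have hanti : AntitoneOn g (Set.Icc 0 t) := by
    apply antitoneOn_of_deriv_nonpos (convex_Icc 0 t)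
    · exact fun u hu => ((hg' u hu.1).continuousAt).continuousWithinAt
    · intro u hu
      rw [interior_Icc] at hu
      exact (hg' u hu.1.le).differentiableAt.differentiableWithinAt
    · intro u hu
      rw [interior_Icc] at hu
      rw [(hg' u hu.1.le).deriv]
      have h1 : f' u ≤ lam - th * f u := hle u hu.1.le
      have h2 : (0:ℝ) < Real.exp (th * u) := Real.exp_pos _
      nlinarith
  by_cases h0t : (0:ℝ) = t
  · subst h0t; exact le_max_left _ _
  have ht' : (0:ℝ) < t := lt_of_le_of_ne ht h0t
  have := hanti (Set.left_mem_Icc.2 ht) (Set.right_mem_Icc.2 ht) ht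
  have hg0 : g 0 ≤ 0 := by
    simp only [hg, mul_zero, Real.exp_zero, mul_one]
    have : f 0 ≤ M := le_max_left _ _
    linarith
  have hgt : (f t - M) * Real.exp (th * t) ≤ 0 := le_trans this hg0
  nlinarith [Real.exp_pos (th * t)]

/-- For every controlled solution of the fluid ODE with `z 0 ∈ [0, m2]`,
the queue components satisfy `q1 t ≤ max (q1 0) (lam1/th1)` and
`q2 t ≤ max (q2 0) (lam2/th2)` for all `t ≥ 0`. -/
theorem stmt_1 (lam1 lam2 m1 m2 mu11 mu12 mu22 th1 th2 r kap : ℝ)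
    (hlam1 : 0 < lam1) (hlam2 : 0 < lam2) (hm1 : 0 < m1) (hm2 : 0 < m2)
    (hmu11 : 0 < mu11) (hmu12 : 0 < mu12) (hmu22 : 0 < mu22)
    (hth1 : 0 < th1) (hth2 : 0 < th2) (hr : 0 < r) (hkap : 0 ≤ kap)
    (q1 q2 z p : ℝ → ℝ)
    (hp : ∀ t, 0 ≤ t → 0 ≤ p t ∧ p t ≤ 1)
    (hq1' : ∀ t, 0 ≤ t →
      HasDerivAt q1 (lam1 - m1*mu11 - p t*(z t*mu12 + (m2 - z t)*mu22) - th1*q1 t) t)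
    (hq2' : ∀ t, 0 ≤ t →
      HasDerivAt q2 (lam2 - (1 - p t)*(z t*mu12 + (m2 - z t)*mu22) - th2*q2 t) t)
    (hz' : ∀ t, 0 ≤ t →
      HasDerivAt z (p t*mu22*(m2 - z t) - (1 - p t)*mu12*z t) t)
    (hz0 : 0 ≤ z 0 ∧ z 0 ≤ m2) :
    ∀ t, 0 ≤ t →
      q1 t ≤ max (q1 0) (lam1/th1) ∧ q2 t ≤ max (q2 0) (lam2/th2) := by
  -- z stays nonnegative
  have hznn : ∀ t, 0 ≤ t → 0 ≤ z t := by
    apply my_nonneg_invariant z (fun t => p t*mu22*(m2 - z t) - (1 - p t)*mu12*z t) hz'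
    · intro t ht hzle
      obtain ⟨hp0, hp1⟩ := hp t ht
      have a1 : 0 ≤ p t * mu22 * (m2 - z t) :=
        mul_nonneg (mul_nonneg hp0 hmu22.le) (by linarith)
      have a2 : 0 ≤ (1 - p t) * mu12 * (-z t) :=
        mul_nonneg (mul_nonneg (by linarith) hmu12.le) (by linarith)
      nlinarith [a1, a2]
    · exact hz0.1
  -- z stays below m2
  have hzm2 : ∀ t, 0 ≤ t → z t ≤ m2 := by
    have := my_nonneg_invariant (fun t => m2 - z t)
      (fun t => -(p t*mu22*(m2 - z t) - (1 - p t)*mu12*z t))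
      (fun t ht => (hz' t ht).const_sub m2)
      (by
        intro t ht hle
        obtain ⟨hp0, hp1⟩ := hp t ht
        have a1 : 0 ≤ p t * mu22 * (z t - m2) :=
          mul_nonneg (mul_nonneg hp0 hmu22.le) (by linarith)
        have a2 : 0 ≤ (1 - p t) * mu12 * z t :=
          mul_nonneg (mul_nonneg (by linarith) hmu12.le) (by nlinarith)
        nlinarith [a1, a2])
      (by linarith [hz0.2])
    intro t ht
    have := this t ht
    linarith
  intro t ht
  constructor
  · apply my_decay_bound lam1 th1 hth1 q1
      (fun u => lam1 - m1*mu11 - p u*(z u*mu12 + (m2 - z u)*mu22) - th1*q1 u) hq1' _ t ht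
    intro u hu
    obtain ⟨hp0, hp1⟩ := hp u hu
    have h1 := hznn u hu
    have h2 := hzm2 u hu
    have a1 : 0 ≤ p u * (z u * mu12 + (m2 - z u) * mu22) :=
      mul_nonneg hp0 (add_nonneg (mul_nonneg h1 hmu12.le)
        (mul_nonneg (by linarith) hmu22.le))
    have a2 : 0 < m1 * mu11 := mul_pos hm1 hmu11
    linarith
  · apply my_decay_bound lam2 th2 hth2 q2
      (fun u => lam2 - (1 - p u)*(z u*mu12 + (m2 - z u)*mu22) - th2*q2 u) hq2' _ t ht
    intro u hu
    obtain ⟨hp0, hp1⟩ := hp u hu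
    have h1 := hznn u hu
    have h2 := hzm2 u hu
    have a1 : 0 ≤ (1 - p u) * (z u * mu12 + (m2 - z u) * mu22) :=
      mul_nonneg (by linarith) (add_nonneg (mul_nonneg h1 hmu12.le)
        (mul_nonneg (by linarith) hmu22.le))
    linarith
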